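/- GreedyAllocation is (1+α)-competitive for fractional online bipartite vertex cover: let G = (L,R,E) be a finite bipartite graph whose right vertices arrive in the order v_1, …, v_m, and let y : L → [0,1] and z : R → [0,1] be produced by GreedyAllocation. Then y_u + z_v ≥ 1 for every edge (u,v) ∈ E, and ∑_{u∈L} y_u + ∑_{v∈R} z_v ≤ (1+α)·|C| for every vertex cover C of G. -/

import Mathlib

open Finset

/-- The constant `α = 1/(e-1)`, so that `1 + α = 1/(1 - 1/e)`. -/
noncomputable def alpha : ℝ := 1 / (Real.exp 1 - 1)

/-- `(CL, CR)` is a vertex cover of the bipartite graph with edge set `E ⊆ L × R`. -/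
def IsVertexCover {L R : Type*} (E : Finset (L × R)) (CL : Finset L) (CR : Finset R) : Prop :=
  ∀ e ∈ E, e.1 ∈ CL ∨ e.2 ∈ CR


lemma exp_one_sub_one_pos : (0:ℝ) < Real.exp 1 - 1 := by
  have := Real.add_one_le_exp (1:ℝ); linarith

lemma alpha_pos : (0:ℝ) < alpha :=
  div_pos one_pos exp_one_sub_one_pos

/-- The potential function `g(y) = (1+α) log((α+y)/α) - y`. -/
noncomputable def gfun : ℝ → ℝ := fun y => (1 + alpha) * Real.log ((alpha + y)/alpha) - y

lemma gfun_zero : gfun 0 = 0 := by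
  unfold gfun
  rw [add_zero, div_self alpha_pos.ne', Real.log_one]; ring

lemma gfun_one : gfun 1 = alpha := by
  have h := exp_one_sub_one_pos
  have he : (alpha + 1)/alpha = Real.exp 1 := by
    unfold alpha; field_simp; ring
  unfold gfun
  rw [he, Real.log_exp]; ring

lemma gkey {y a : ℝ} (hy : 0 ≤ y) (hya : y ≤ a) :
    (1 - a)/(alpha + a) * (a - y) ≤ gfun a - gfun y := by
  have hα := alpha_pos
  have h1 : 0 < alpha + y := by linarith
  have h2 : 0 < alpha + a := by linarith
  have hlog : Real.log ((alpha + y)/(alpha + a)) ≤ (alpha + y)/(alpha + a) - 1 :=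
    Real.log_le_sub_one_of_pos (by positivity)
  have hld : Real.log ((alpha+y)/(alpha+a)) = Real.log (alpha+y) - Real.log (alpha+a) :=
    Real.log_div h1.ne' h2.ne'
  have heq : 1 - (alpha+y)/(alpha+a) = (a - y)/(alpha+a) := by
    field_simp; ring
  have key : (a - y)/(alpha + a) ≤ Real.log (alpha+a) - Real.log (alpha+y) := by
    linarith
  have hga : gfun a - gfun y = (1+alpha) * (Real.log (alpha+a) - Real.log (alpha+y)) - (a - y) := by
    unfold gfun
    rw [Real.log_div h2.ne' hα.ne', Real.log_div h1.ne' hα.ne']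
    ring
  rw [hga]
  have h3 : (1 - a)/(alpha + a) * (a - y) = (1+alpha) * ((a-y)/(alpha+a)) - (a - y) := by
    field_simp; ring
  rw [h3]
  have := mul_le_mul_of_nonneg_left key (by linarith : (0:ℝ) ≤ 1 + alpha)
  linarith

lemma gfun_mono {y a : ℝ} (hy : 0 ≤ y) (hya : y ≤ a) (ha : a ≤ 1) : gfun y ≤ gfun a := by
  have h2 : 0 < alpha + a := by linarith [alpha_pos]
  have h0 : (0:ℝ) ≤ (1 - a)/(alpha + a) * (a - y) :=
    mul_nonneg (div_nonneg (by linarith) h2.le) (by linarith)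
  linarith [gkey hy hya]

lemma gfun_nonneg {y : ℝ} (hy : 0 ≤ y) (hy1 : y ≤ 1) : 0 ≤ gfun y := by
  have := gfun_mono le_rfl hy hy1
  rw [gfun_zero] at this; exact this

lemma gfun_le_alpha {y : ℝ} (hy : 0 ≤ y) (hy1 : y ≤ 1) : gfun y ≤ alpha := by
  have := gfun_mono hy hy1 le_rfl
  rw [gfun_one] at this; exact this

/-- Per-vertex key inequality. -/
lemma hperu_lem {a y : ℝ} (hy : 0 ≤ y) :
    (1 - a)/(alpha + a) * max (a - y) 0 ≤ gfun (max y a) - gfun y := by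
  rcases le_total a y with h|h
  · rw [max_eq_left h, max_eq_right (by linarith : a - y ≤ 0)]
    simp
  · rw [max_eq_right h, max_eq_left (by linarith : (0:ℝ) ≤ a - y)]
    exact gkey hy h

set_option maxHeartbeats 2000000 in
/-- GreedyAllocation is `(1+α)`-competitive for fractional online bipartite vertex cover.
The online vertices are `0, 1, …, m-1 : Fin m`, arriving in this order. `Y i` is the
potential vector on the offline side `L` after the first `i` arrivals (`Y 0 = 0`), `A i`
is the water level chosen at step `i` (the largest `a ∈ [0,1]` with
`(1-a) + ∑_{u ∈ N(v_i)} max (a - y_u) 0 ≤ 1 + α`), after which each `y_u`, `u ∈ N(v_i)`,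
is raised to `max (y_u) (A i)` and `z_{v_i} = 1 - A i`. -/
theorem stmt4 {L : Type*} [Fintype L] [DecidableEq L] (m : ℕ)
    (E : Finset (L × Fin m))
    (Y : ℕ → L → ℝ) (A : Fin m → ℝ) (z : Fin m → ℝ)
    (hY0 : Y 0 = fun _ => 0)
    (hA : ∀ i : Fin m,
      IsGreatest {a : ℝ | a ∈ Set.Icc (0:ℝ) 1 ∧
        (1 - a) + ∑ u ∈ Finset.univ.filter (fun u => (u, i) ∈ E), max (a - Y i u) 0
          ≤ 1 + alpha} (A i))
    (hYstep : ∀ i : Fin m, ∀ u : L,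
      Y ((i : ℕ) + 1) u = if (u, i) ∈ E then max (Y i u) (A i) else Y i u)
    (hz : ∀ i : Fin m, z i = 1 - A i) :
    (∀ e ∈ E, 1 ≤ Y m e.1 + z e.2) ∧
    ∀ CL : Finset L, ∀ CR : Finset (Fin m), IsVertexCover E CL CR →
      ∑ u : L, Y m u + ∑ v : Fin m, z v ≤ (1 + alpha) * ((CL.card : ℝ) + (CR.card : ℝ)) := by
  have hα := alpha_pos
  have hA0 : ∀ i : Fin m, 0 ≤ A i := fun i => (hA i).1.1.1
  have hA1 : ∀ i : Fin m, A i ≤ 1 := fun i => (hA i).1.1.2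
  have hAcon : ∀ i : Fin m,
      (1 - A i) + ∑ u ∈ Finset.univ.filter (fun u => (u, i) ∈ E), max (A i - Y i u) 0
        ≤ 1 + alpha := fun i => (hA i).1.2
  -- bounds on Y
  have hbound : ∀ n, n ≤ m → ∀ u, 0 ≤ Y n u ∧ Y n u ≤ 1 := by
    intro n
    induction n with
    | zero => intro _ u; simp [hY0]
    | succ k ih =>
      intro hk u
      have hkm : k < m := hk
      obtain ⟨h0, h1⟩ := ih hkm.le u
      have h : Y (k+1) u
          = if (u, (⟨k, hkm⟩ : Fin m)) ∈ E then max (Y k u) (A ⟨k, hkm⟩) else Y k u :=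
        hYstep ⟨k, hkm⟩ u
      rw [h]
      split
      · exact ⟨le_trans h0 (le_max_left _ _), max_le h1 (hA1 _)⟩
      · exact ⟨h0, h1⟩
  -- step monotonicity
  have hstepmono : ∀ n, n < m → ∀ u, Y n u ≤ Y (n+1) u := by
    intro n hn u
    have h : Y (n+1) u
        = if (u, (⟨n, hn⟩ : Fin m)) ∈ E then max (Y n u) (A ⟨n, hn⟩) else Y n u :=
      hYstep ⟨n, hn⟩ u
    rw [h]
    split
    · exact le_max_left _ _
    · exact le_rfl
  -- full monotonicity
  have hmono : ∀ u k, k ≤ m → ∀ j, j ≤ k → Y j u ≤ Y k u := by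
    intro u k
    induction k with
    | zero => intro _ j hj
              obtain rfl : j = 0 := Nat.le_zero.mp hj
              exact le_rfl
    | succ k ih =>
      intro hk j hj
      rcases eq_or_lt_of_le hj with h|h
      · rw [h]
      · exact le_trans (ih (by omega) j (by omega)) (hstepmono k (by omega) u)
  -- difference formula
  have hdiff : ∀ i : Fin m, ∀ u,
      Y ((i:ℕ)+1) u - Y (i:ℕ) u = if (u, i) ∈ E then max (A i - Y (i:ℕ) u) 0 else 0 := by
    intro i u
    by_cases hc : (u, i) ∈ E
    · rw [hYstep i u, if_pos hc, if_pos hc]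
      rcases le_total (A i) (Y (i:ℕ) u) with h|h
      · rw [max_eq_left h, max_eq_right (by linarith : A i - Y (i:ℕ) u ≤ 0)]; ring
      · rw [max_eq_right h, max_eq_left (by linarith : (0:ℝ) ≤ A i - Y (i:ℕ) u)]
    · rw [hYstep i u, if_neg hc, if_neg hc]; ring
  -- part 1
  have part1 : ∀ e ∈ E, 1 ≤ Y m e.1 + z e.2 := by
    rintro ⟨u, i⟩ he
    have h : Y ((i:ℕ)+1) u = if (u, i) ∈ E then max (Y (i:ℕ) u) (A i) else Y (i:ℕ) u :=
      hYstep i u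
    rw [if_pos he] at h
    have h2 : A i ≤ Y ((i:ℕ)+1) u := by rw [h]; exact le_max_right _ _
    have h3 : Y ((i:ℕ)+1) u ≤ Y m u := hmono u m le_rfl _ (Nat.succ_le_of_lt i.isLt)
    simp only [hz i]
    linarith
  refine ⟨part1, ?_⟩
  intro CL CR hcover
  -- tightness
  have htight : ∀ i : Fin m, A i = 1 ∨
      (1 - A i) + ∑ u ∈ Finset.univ.filter (fun u => (u, i) ∈ E), max (A i - Y (i:ℕ) u) 0
        = 1 + alpha := by
    intro i
    by_contra hcon
    push_neg at hcon
    obtain ⟨hne1, hne2⟩ := hcon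
    have hub := (hA i).2
    have hlt : (1 - A i) + ∑ u ∈ Finset.univ.filter (fun u => (u, i) ∈ E),
        max (A i - Y (i:ℕ) u) 0 < 1 + alpha := lt_of_le_of_ne (hAcon i) hne2
    have hAlt1 : A i < 1 := lt_of_le_of_ne (hA1 i) hne1
    set S := ∑ u ∈ Finset.univ.filter (fun u => (u, i) ∈ E), max (A i - Y (i:ℕ) u) 0 with hS
    set n := (Finset.univ.filter (fun u => (u, i) ∈ E)).card with hn
    set ε := (1 + alpha - ((1 - A i) + S))/(n+1) with hε
    have hεpos : 0 < ε := div_pos (by linarith) (by positivity)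
    set a' := min 1 (A i + ε) with ha'
    have hgt : A i < a' := lt_min hAlt1 (by linarith)
    have ha'le : a' ≤ A i + ε := min_le_right _ _
    have hsum' : ∑ u ∈ Finset.univ.filter (fun u => (u, i) ∈ E), max (a' - Y (i:ℕ) u) 0
        ≤ S + n * ε := by
      have hle : ∑ u ∈ Finset.univ.filter (fun u => (u, i) ∈ E), max (a' - Y (i:ℕ) u) 0
          ≤ ∑ u ∈ Finset.univ.filter (fun u => (u, i) ∈ E), (max (A i - Y (i:ℕ) u) 0 + ε) := by
        apply Finset.sum_le_sum
        intro u _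
        have h0 : (0:ℝ) ≤ max (A i - Y (i:ℕ) u) 0 := le_max_right _ _
        have h1 : A i - Y (i:ℕ) u ≤ max (A i - Y (i:ℕ) u) 0 := le_max_left _ _
        rcases le_total (a' - Y (i:ℕ) u) 0 with h|h
        · rw [max_eq_right h]; linarith
        · rw [max_eq_left h]; linarith
      rw [Finset.sum_add_distrib, Finset.sum_const, nsmul_eq_mul] at hle
      exact hle
    have hεsum : ((n:ℝ)+1) * ε = 1 + alpha - ((1 - A i) + S) := by
      have hne : ((n:ℝ)+1) ≠ 0 := by positivity
      rw [hε, mul_comm, div_mul_cancel₀ _ hne]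
    have hmem : a' ≤ A i := hub ⟨⟨le_trans (hA0 i) hgt.le, min_le_left _ _⟩, by
      linarith [hsum', hεsum, hgt, hεpos]⟩
    exact absurd hmem (not_le.mpr hgt)
  -- telescoping for Y
  have hsumY : ∑ u : L, Y m u
      = ∑ i : Fin m, ∑ u ∈ Finset.univ.filter (fun u => (u, i) ∈ E),
          max (A i - Y (i:ℕ) u) 0 := by
    have h1 : ∀ u, Y m u = ∑ n ∈ Finset.range m, (Y (n+1) u - Y n u) := by
      intro u
      rw [Finset.sum_range_sub (fun n => Y n u)]
      simp [hY0]
    calc ∑ u : L, Y m u = ∑ u : L, ∑ n ∈ Finset.range m, (Y (n+1) u - Y n u) :=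
          Finset.sum_congr rfl (fun u _ => h1 u)
      _ = ∑ n ∈ Finset.range m, ∑ u : L, (Y (n+1) u - Y n u) := Finset.sum_comm
      _ = ∑ i : Fin m, ∑ u : L, (Y ((i:ℕ)+1) u - Y (i:ℕ) u) :=
          (Fin.sum_univ_eq_sum_range (fun n => ∑ u : L, (Y (n+1) u - Y n u)) m).symm
      _ = ∑ i : Fin m, ∑ u ∈ Finset.univ.filter (fun u => (u, i) ∈ E),
            max (A i - Y (i:ℕ) u) 0 := by
          apply Finset.sum_congr rfl
          intro i _
          rw [Finset.sum_filter]
          exact Finset.sum_congr rfl (fun u _ => hdiff i u)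
  -- T nonneg
  have hTnonneg : ∀ i : Fin m, ∀ u : L,
      0 ≤ (Y ((i:ℕ)+1) u - Y (i:ℕ) u) + (gfun (Y ((i:ℕ)+1) u) - gfun (Y (i:ℕ) u)) := by
    intro i u
    have hm := hstepmono (i:ℕ) i.isLt u
    obtain ⟨hb0, _⟩ := hbound (i:ℕ) (le_of_lt i.isLt) u
    obtain ⟨_, hb1⟩ := hbound ((i:ℕ)+1) (Nat.succ_le_of_lt i.isLt) u
    have hg := gfun_mono hb0 hm hb1
    linarith
  -- per-step bound for i ∉ CR
  have hstepCL : ∀ i : Fin m, i ∉ CR →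
      (∑ u ∈ Finset.univ.filter (fun u => (u, i) ∈ E), max (A i - Y (i:ℕ) u) 0) + z i
        ≤ ∑ u ∈ CL, ((Y ((i:ℕ)+1) u - Y (i:ℕ) u) + (gfun (Y ((i:ℕ)+1) u) - gfun (Y (i:ℕ) u))) := by
    intro i hiCR
    have hsub : Finset.univ.filter (fun u => (u, i) ∈ E) ⊆ CL := by
      intro u hu
      rw [Finset.mem_filter] at hu
      rcases hcover (u, i) hu.2 with h|h
      · exact h
      · exact absurd h hiCR
    have hstep2 : (∑ u ∈ Finset.univ.filter (fun u => (u, i) ∈ E), max (A i - Y (i:ℕ) u) 0) + z i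
        ≤ ∑ u ∈ Finset.univ.filter (fun u => (u, i) ∈ E),
            ((Y ((i:ℕ)+1) u - Y (i:ℕ) u) + (gfun (Y ((i:ℕ)+1) u) - gfun (Y (i:ℕ) u))) := by
      have hDy : ∀ u ∈ Finset.univ.filter (fun u => (u, i) ∈ E),
          Y ((i:ℕ)+1) u - Y (i:ℕ) u = max (A i - Y (i:ℕ) u) 0 := by
        intro u hu
        rw [Finset.mem_filter] at hu
        rw [hdiff i u, if_pos hu.2]
      have hDyeq : ∑ u ∈ Finset.univ.filter (fun u => (u, i) ∈ E), (Y ((i:ℕ)+1) u - Y (i:ℕ) u)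
          = ∑ u ∈ Finset.univ.filter (fun u => (u, i) ∈ E), max (A i - Y (i:ℕ) u) 0 :=
        Finset.sum_congr rfl hDy
      rw [Finset.sum_add_distrib, hDyeq]
      rcases htight i with hone | htt
      · -- A i = 1, z i = 0
        have hz0 : z i = 0 := by rw [hz i, hone]; ring
        rw [hz0]
        have hg : (0:ℝ) ≤ ∑ u ∈ Finset.univ.filter (fun u => (u, i) ∈ E),
            (gfun (Y ((i:ℕ)+1) u) - gfun (Y (i:ℕ) u)) := by
          apply Finset.sum_nonneg
          intro u _
          have hm := hstepmono (i:ℕ) i.isLt u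
          obtain ⟨hb0, _⟩ := hbound (i:ℕ) (le_of_lt i.isLt) u
          obtain ⟨_, hb1⟩ := hbound ((i:ℕ)+1) (Nat.succ_le_of_lt i.isLt) u
          linarith [gfun_mono hb0 hm hb1]
        linarith
      · -- tight case
        have hDi : ∑ u ∈ Finset.univ.filter (fun u => (u, i) ∈ E), max (A i - Y (i:ℕ) u) 0
            = alpha + A i := by linarith
        have hge : ∑ u ∈ Finset.univ.filter (fun u => (u, i) ∈ E),
            ((1 - A i)/(alpha + A i) * max (A i - Y (i:ℕ) u) 0)
            ≤ ∑ u ∈ Finset.univ.filter (fun u => (u, i) ∈ E),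
                (gfun (Y ((i:ℕ)+1) u) - gfun (Y (i:ℕ) u)) := by
          apply Finset.sum_le_sum
          intro u hu
          rw [Finset.mem_filter] at hu
          have hyy : Y ((i:ℕ)+1) u = max (Y (i:ℕ) u) (A i) := by
            rw [hYstep i u, if_pos hu.2]
          rw [hyy]
          exact hperu_lem (hbound (i:ℕ) (le_of_lt i.isLt) u).1
        rw [← Finset.mul_sum, hDi] at hge
        have hcancel : (1 - A i)/(alpha + A i) * (alpha + A i) = 1 - A i :=
          div_mul_cancel₀ _ (by linarith [hA0 i] : alpha + A i ≠ 0)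
        rw [hcancel] at hge
        rw [hz i]
        linarith
    exact le_trans hstep2 (Finset.sum_le_sum_of_subset_of_nonneg hsub
      (fun u _ _ => hTnonneg i u))
  -- per-step bound for i ∈ CR
  have hstepCR : ∀ i : Fin m,
      (∑ u ∈ Finset.univ.filter (fun u => (u, i) ∈ E), max (A i - Y (i:ℕ) u) 0) + z i
        ≤ 1 + alpha := by
    intro i
    have := hAcon i
    rw [hz i]
    linarith
  -- telescoping for T per u
  have hTsum : ∀ u : L, ∑ i : Fin m,
      ((Y ((i:ℕ)+1) u - Y (i:ℕ) u) + (gfun (Y ((i:ℕ)+1) u) - gfun (Y (i:ℕ) u)))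
      ≤ 1 + alpha := by
    intro u
    have heq : ∑ i : Fin m,
        ((Y ((i:ℕ)+1) u - Y (i:ℕ) u) + (gfun (Y ((i:ℕ)+1) u) - gfun (Y (i:ℕ) u)))
        = ∑ n ∈ Finset.range m,
            ((Y (n+1) u - Y n u) + (gfun (Y (n+1) u) - gfun (Y n u))) :=
      Fin.sum_univ_eq_sum_range
        (fun n => (Y (n+1) u - Y n u) + (gfun (Y (n+1) u) - gfun (Y n u))) m
    rw [heq, Finset.sum_add_distrib, Finset.sum_range_sub (fun n => Y n u),
      Finset.sum_range_sub (fun n => gfun (Y n u))]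
    have hY00 : Y 0 u = 0 := by rw [hY0]
    rw [hY00, gfun_zero]
    obtain ⟨hb0, hb1⟩ := hbound m le_rfl u
    have := gfun_le_alpha hb0 hb1
    linarith
  -- assemble
  have hCRcard : Finset.univ.filter (fun i : Fin m => i ∈ CR) = CR := by
    ext x; simp
  calc ∑ u : L, Y m u + ∑ v : Fin m, z v
      = ∑ i : Fin m,
          ((∑ u ∈ Finset.univ.filter (fun u => (u, i) ∈ E), max (A i - Y (i:ℕ) u) 0) + z i) := by
        rw [hsumY, Finset.sum_add_distrib]
    _ = (∑ i ∈ Finset.univ.filter (fun i : Fin m => i ∈ CR),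
          ((∑ u ∈ Finset.univ.filter (fun u => (u, i) ∈ E), max (A i - Y (i:ℕ) u) 0) + z i))
        + (∑ i ∈ Finset.univ.filter (fun i : Fin m => i ∉ CR),
          ((∑ u ∈ Finset.univ.filter (fun u => (u, i) ∈ E), max (A i - Y (i:ℕ) u) 0) + z i)) :=
        (Finset.sum_filter_add_sum_filter_not _ _ _).symm
    _ ≤ (∑ _i ∈ Finset.univ.filter (fun i : Fin m => i ∈ CR), (1 + alpha))
        + (∑ i ∈ Finset.univ.filter (fun i : Fin m => i ∉ CR),
            ∑ u ∈ CL, ((Y ((i:ℕ)+1) u - Y (i:ℕ) u) + (gfun (Y ((i:ℕ)+1) u) - gfun (Y (i:ℕ) u)))) := by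
        apply add_le_add
        · exact Finset.sum_le_sum (fun i _ => hstepCR i)
        · apply Finset.sum_le_sum
          intro i hi
          rw [Finset.mem_filter] at hi
          exact hstepCL i hi.2
    _ ≤ (1 + alpha) * (CR.card : ℝ)
        + ∑ i : Fin m, ∑ u ∈ CL,
            ((Y ((i:ℕ)+1) u - Y (i:ℕ) u) + (gfun (Y ((i:ℕ)+1) u) - gfun (Y (i:ℕ) u))) := by
        apply add_le_add
        · rw [Finset.sum_const, nsmul_eq_mul, hCRcard, mul_comm]
        · apply Finset.sum_le_sum_of_subset_of_nonneg (Finset.filter_subset _ _)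
          intro i _ _
          exact Finset.sum_nonneg (fun u _ => hTnonneg i u)
    _ ≤ (1 + alpha) * (CR.card : ℝ) + (1 + alpha) * (CL.card : ℝ) := by
        apply add_le_add (le_refl _)
        rw [Finset.sum_comm]
        calc ∑ u ∈ CL, ∑ i : Fin m,
              ((Y ((i:ℕ)+1) u - Y (i:ℕ) u) + (gfun (Y ((i:ℕ)+1) u) - gfun (Y (i:ℕ) u)))
            ≤ ∑ _u ∈ CL, (1 + alpha) := Finset.sum_le_sum (fun u _ => hTsum u)
          _ = (1 + alpha) * (CL.card : ℝ) := by
              rw [Finset.sum_const, nsmul_eq_mul, mul_comm]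
    _ = (1 + alpha) * ((CL.card : ℝ) + (CR.card : ℝ)) := by ring
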